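/- Let u, v > 0 be real numbers and suppose k = 1 + u/v is a real number such that |π − p/q| < 1/q^k holds for infinitely many coprime positive integers (p, q). Then the sequence 1/(n^u · |sin n|^v) does not tend to 0; in fact there is a constant C > 0 and infinitely many positive integers n with 1/(n^u · |sin n|^v) > C. -/

import Mathlib

open Real Filter

private lemma sin_nat_ne_zero' {p : ℕ} (hp : 0 < p) : Real.sin p ≠ 0 := by
  intro h
  rcases Real.sin_eq_zero_iff.1 h with ⟨n, hn⟩
  have hppos : (0:ℝ) < p := by exact_mod_cast hp
  have hn0 : (n:ℝ) ≠ 0 := by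
    intro h0
    rw [h0, zero_mul] at hn
    exact hppos.ne (by linarith)
  have hpi : (π : ℝ) = (p : ℝ) / (n : ℝ) := by
    field_simp
    linarith [hn]
  have hirr : Irrational ((p : ℝ) / (n : ℝ)) := hpi ▸ irrational_pi
  have : ((p : ℝ) / (n : ℝ)) = (((p : ℚ) / (n : ℚ) : ℚ) : ℝ) := by push_cast; ring
  rw [this] at hirr
  exact (Rat.not_irrational _) hirr

private lemma key_est (u v : ℝ) (hu : 0 < u) (hv : 0 < v) {p q : ℕ}
    (hp : 0 < p) (hq : 0 < q)
    (h : |π - (p : ℝ) / q| < 1 / (q : ℝ) ^ (1 + u / v)) :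
    q ≤ p ∧ 1 / (π + 1) ^ u < 1 / ((p : ℝ) ^ u * |Real.sin p| ^ v) := by
  have hq1 : (1:ℝ) ≤ q := by exact_mod_cast hq
  have hqpos : (0:ℝ) < q := by linarith
  have hppos : (0:ℝ) < p := by exact_mod_cast hp
  have hk : (0:ℝ) < 1 + u / v := by positivity
  have hqk : (1:ℝ) ≤ (q:ℝ) ^ (1 + u / v) := Real.one_le_rpow hq1 hk.le
  have hqkpos : (0:ℝ) < (q:ℝ) ^ (1 + u / v) := by positivity
  have hlt1 : |π - (p:ℝ)/q| < 1 := lt_of_lt_of_le h (by rw [div_le_one hqkpos]; exact hqk)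
  have habs := abs_lt.1 hlt1
  have hpi3 := Real.pi_gt_three
  -- p/q bounds
  have hub : (p:ℝ)/q < π + 1 := by linarith [habs.1]
  have hlb : (2:ℝ) < (p:ℝ)/q := by linarith [habs.2]
  have hqp : q ≤ p := by
    have : (q:ℝ) < p := by
      have := (div_lt_iff₀ hqpos).1 hub
      nlinarith [(lt_div_iff₀ hqpos).1 hlb]
    exact_mod_cast this.le
  refine ⟨hqp, ?_⟩
  -- |sin p| < q ^ (-(u/v))
  have hsin_eq : |Real.sin p| = |Real.sin ((p:ℝ) - q * π)| := by
    rw [Real.sin_sub_nat_mul_pi, abs_mul, abs_pow, abs_neg, abs_one, one_pow, one_mul]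
  have habs_eq : |(p:ℝ) - q * π| = q * |π - (p:ℝ)/q| := by
    rw [← abs_of_pos hqpos, ← abs_mul, abs_sub_comm]
    congr 1
    field_simp
    rw [abs_of_pos hqpos]
    ring
  have hsin_lt : |Real.sin p| < (q:ℝ) ^ (-(u/v)) := by
    calc |Real.sin p| = |Real.sin ((p:ℝ) - q * π)| := hsin_eq
      _ ≤ |(p:ℝ) - q * π| := Real.abs_sin_le_abs
      _ = q * |π - (p:ℝ)/q| := habs_eq
      _ < q * (1 / (q:ℝ) ^ (1 + u / v)) := by
          exact (mul_lt_mul_iff_right₀ hqpos).2 h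
      _ = (q:ℝ) ^ (-(u/v)) := by
          rw [mul_one_div, div_eq_iff hqkpos.ne', ← Real.rpow_add hqpos,
            show -(u/v) + (1 + u/v) = 1 by ring, Real.rpow_one]
  have hsinv : |Real.sin p| ^ v < (q:ℝ) ^ (-u) := by
    have := Real.rpow_lt_rpow (abs_nonneg _) hsin_lt hv
    rwa [← Real.rpow_mul hqpos.le,
      show (-(u/v)) * v = -u by rw [neg_mul, div_mul_cancel₀ _ hv.ne']] at this
  have hsinpos : 0 < |Real.sin p| := abs_pos.2 (sin_nat_ne_zero' hp)
  have hXpos : 0 < (p : ℝ) ^ u * |Real.sin p| ^ v := by positivity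
  have hXlt : (p : ℝ) ^ u * |Real.sin p| ^ v < (π + 1) ^ u := by
    calc (p : ℝ) ^ u * |Real.sin p| ^ v < (p : ℝ) ^ u * (q:ℝ) ^ (-u) := by
          exact (mul_lt_mul_iff_right₀ (by positivity)).2 hsinv
      _ = ((p:ℝ)/q) ^ u := by
          rw [Real.rpow_neg hqpos.le, Real.div_rpow hppos.le hqpos.le, div_eq_mul_inv]
      _ < (π + 1) ^ u := Real.rpow_lt_rpow (by positivity) hub hu
  exact one_div_lt_one_div_of_lt hXpos hXlt

open Real Filter in
theorem seq_not_tendsto_zero (u v : ℝ) (hu : 0 < u) (hv : 0 < v)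
    (hinf : {pq : ℕ × ℕ | 0 < pq.1 ∧ 0 < pq.2 ∧ Nat.Coprime pq.1 pq.2 ∧
        |π - (pq.1 : ℝ) / (pq.2 : ℝ)| < 1 / (pq.2 : ℝ) ^ (1 + u / v)}.Infinite) :
    ¬ Tendsto (fun n : ℕ => 1 / ((n : ℝ) ^ u * |Real.sin n| ^ v)) atTop (nhds 0) ∧
    ∃ C > 0, {n : ℕ | 0 < n ∧ C < 1 / ((n : ℝ) ^ u * |Real.sin n| ^ v)}.Infinite := by
  set S := {pq : ℕ × ℕ | 0 < pq.1 ∧ 0 < pq.2 ∧ Nat.Coprime pq.1 pq.2 ∧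
      |π - (pq.1 : ℝ) / (pq.2 : ℝ)| < 1 / (pq.2 : ℝ) ^ (1 + u / v)} with hS
  set C := 1 / (π + 1) ^ u with hC
  have hCpos : 0 < C := by positivity
  set T := {n : ℕ | 0 < n ∧ C < 1 / ((n : ℝ) ^ u * |Real.sin n| ^ v)} with hT
  have hsub : Prod.fst '' S ⊆ T := by
    rintro _ ⟨⟨p, q⟩, ⟨hp, hq, _, hest⟩, rfl⟩
    exact ⟨hp, (key_est u v hu hv hp hq hest).2⟩
  have hTinf : T.Infinite := by
    have himg : (Prod.fst '' S).Infinite := by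
      intro hfin
      apply hinf
      have : S ⊆ ⋃ p ∈ Prod.fst '' S, ({p} ×ˢ Set.Iic p) := by
        rintro ⟨p, q⟩ hpq
        have hqp := (key_est u v hu hv hpq.1 hpq.2.1 hpq.2.2.2).1
        exact Set.mem_biUnion ⟨(p, q), hpq, rfl⟩ ⟨rfl, hqp⟩
      exact Set.Finite.subset
        (hfin.biUnion fun p _ => (Set.finite_singleton p).prod (Set.finite_Iic p)) this
    exact himg.mono hsub
  refine ⟨?_, C, hCpos, hTinf⟩
  intro htend
  have hev : ∀ᶠ n : ℕ in atTop, 1 / ((n : ℝ) ^ u * |Real.sin n| ^ v) < C :=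
    htend.eventually_lt_const hCpos
  obtain ⟨N, hN⟩ := eventually_atTop.1 hev
  obtain ⟨n, hnT, hn⟩ := hTinf.exists_gt N
  exact absurd (hN n hn.le) (not_lt.2 hnT.2.le)
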